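/- For any K > 0 and τ₁ > 0, every complex root μ of the equation μ = K(e^{-μτ₁} - 2) has negative real part. -/

import Mathlib

theorem stmt_2 (K τ₁ : ℝ) (hK : 0 < K) (hτ : 0 < τ₁) (μ : ℂ)
    (hμ : μ = (K : ℂ) * (Complex.exp (-μ * τ₁) - 2)) : μ.re < 0 := by
  by_contra h
  push_neg at h
  have heq : μ + 2 * (K : ℂ) = (K : ℂ) * Complex.exp (-μ * τ₁) := by
    linear_combination hμ
  have habs : ‖μ + 2 * (K : ℂ)‖ ≤ K := by
    rw [heq, norm_mul, Complex.norm_exp]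
    have : ((-μ * τ₁ : ℂ)).re = -μ.re * τ₁ := by simp
    rw [this]
    have h1 : Real.exp (-μ.re * τ₁) ≤ 1 := by
      apply Real.exp_le_one_iff.mpr
      nlinarith
    calc ‖(K : ℂ)‖ * Real.exp (-μ.re * τ₁)
        ≤ ‖(K : ℂ)‖ * 1 := by
          exact mul_le_mul_of_nonneg_left h1 (norm_nonneg _)
      _ = K := by simp [abs_of_pos hK]
  have hre : 2 * K ≤ (μ + 2 * (K : ℂ)).re := by
    simp; linarith
  have := le_trans hre (Complex.re_le_norm _)
  linarith
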